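/- If p and p+2 are both prime, p ≥ 5, the primes 5, 7, 11 all divide p−1, and φ(p−1)/(p−1) ≥ φ(p+1)/(p+1), then ∏_{r | p+1, r prime, r ≥ 13} (1 + 1/(r−1)) ≥ 77/72. -/

import Mathlib

private lemma aux_two (p : ℕ) (h5 : 5 ≤ p) (hpodd : ¬ 2 ∣ p) :
    2 ∣ p - 1 ∧ 2 ∣ p + 1 := by omega

private lemma aux_three (p : ℕ) (h5 : 5 ≤ p) (h3p : ¬ 3 ∣ p) (h3p2 : ¬ 3 ∣ (p + 2)) :
    3 ∣ p + 1 := by omega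

private lemma aux_sub (p d : ℕ) (h5 : 5 ≤ p) (hd1 : d ∣ p - 1) (hd2 : d ∣ p + 1) :
    d ∣ 2 := by
  have h := Nat.dvd_sub hd2 hd1
  have he : p + 1 - (p - 1) = 2 := by omega
  rwa [he] at h

private lemma aux_q (q : ℕ) (hq : q.Prime) (h13 : q < 13)
    (hq5 : q ≠ 5) (hq7 : q ≠ 7) (hq11 : q ≠ 11) : q = 2 ∨ q = 3 := by
  have h2 := hq.two_le
  interval_cases q <;> revert hq hq5 hq7 hq11 <;> decide

theorem stmt_8 (p : ℕ) (hp : p.Prime) (hp2 : (p + 2).Prime) (h5 : 5 ≤ p)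
    (h5d : 5 ∣ p - 1) (h7d : 7 ∣ p - 1) (h11d : 11 ∣ p - 1)
    (h : (Nat.totient (p - 1) : ℚ) / ((p : ℚ) - 1) ≥ (Nat.totient (p + 1) : ℚ) / ((p : ℚ) + 1)) :
    (77 / 72 : ℚ) ≤ ∏ r ∈ (p + 1).primeFactors.filter (fun r => 13 ≤ r),
      (1 + 1 / ((r : ℚ) - 1)) := by
  have hpodd : ¬ 2 ∣ p := by
    intro hd
    rcases (Nat.Prime.eq_one_or_self_of_dvd hp 2 hd) with hh | hh
    · exact absurd hh (by norm_num)
    · linarith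
  have h3p : ¬ 3 ∣ p := by
    intro hd
    rcases (Nat.Prime.eq_one_or_self_of_dvd hp 3 hd) with hh | hh
    · exact absurd hh (by norm_num)
    · linarith
  have h3p2 : ¬ 3 ∣ (p + 2) := by
    intro hd
    rcases (Nat.Prime.eq_one_or_self_of_dvd hp2 3 hd) with hh | hh
    · exact absurd hh (by norm_num)
    · linarith
  obtain ⟨h2d, h2d'⟩ := aux_two p h5 hpodd
  have h3d' : 3 ∣ p + 1 := aux_three p h5 h3p h3p2
  have hple : (5:ℚ) ≤ (p:ℚ) := by exact_mod_cast h5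
  have hm1 : p - 1 ≠ 0 := Nat.sub_ne_zero_of_lt (by linarith)
  have hp1 : p + 1 ≠ 0 := p.succ_ne_zero
  have hcast : ((p - 1 : ℕ) : ℚ) = (p : ℚ) - 1 := by
    have h1 : (1:ℕ) ≤ p := by linarith
    push_cast [Nat.cast_sub h1]; ring
  have hppos : (0:ℚ) < (p:ℚ) - 1 := by linarith
  have hppos' : (0:ℚ) < (p:ℚ) + 1 := by linarith
  have hprodA : (Nat.totient (p - 1) : ℚ) / ((p : ℚ) - 1)
      = ∏ q ∈ (p-1).primeFactors, (1 - (q:ℚ)⁻¹) := by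
    rw [Nat.totient_eq_mul_prod_factors, hcast, mul_div_cancel_left₀ _ (ne_of_gt hppos)]
  have hprodB : (Nat.totient (p + 1) : ℚ) / ((p : ℚ) + 1)
      = ∏ q ∈ (p+1).primeFactors, (1 - (q:ℚ)⁻¹) := by
    rw [Nat.totient_eq_mul_prod_factors]
    push_cast
    rw [mul_div_cancel_left₀ _ (ne_of_gt hppos')]
  -- upper bound for the (p-1)-product
  have hS : ({2,5,7,11} : Finset ℕ) ⊆ (p-1).primeFactors := by
    intro q hq
    fin_cases hq <;> rw [Nat.mem_primeFactors] <;>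
      exact ⟨by norm_num, by assumption, hm1⟩
  have hAle : ∏ q ∈ (p-1).primeFactors, (1 - (q:ℚ)⁻¹) ≤ 24/77 := by
    have hsplit := Finset.prod_sdiff (f := fun q : ℕ => (1 - (q:ℚ)⁻¹)) hS
    have hfact : ∀ q ∈ (p-1).primeFactors \ {2,5,7,11},
        (0:ℚ) ≤ 1 - (q:ℚ)⁻¹ ∧ 1 - (q:ℚ)⁻¹ ≤ 1 := by
      intro q hq
      have hq2 : 2 ≤ q := (Nat.prime_of_mem_primeFactors
        (Finset.mem_sdiff.mp hq).1).two_le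
      have hq2' : (2:ℚ) ≤ (q:ℚ) := by exact_mod_cast hq2
      have hinv : (q:ℚ)⁻¹ ≤ 1 := by
        rw [inv_le_one_iff₀]; right; linarith
      have hinv0 : (0:ℚ) ≤ (q:ℚ)⁻¹ := by positivity
      constructor <;> linarith
    have h1 : ∏ q ∈ (p-1).primeFactors \ {2,5,7,11}, (1 - (q:ℚ)⁻¹) ≤ 1 :=
      Finset.prod_le_one (fun q hq => (hfact q hq).1) (fun q hq => (hfact q hq).2)
    have h2 : ∏ q ∈ ({2,5,7,11} : Finset ℕ), (1 - (q:ℚ)⁻¹) = 24/77 := by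
      norm_num
    have h0 : (0:ℚ) ≤ ∏ q ∈ ({2,5,7,11} : Finset ℕ), (1 - (q:ℚ)⁻¹) := by
      rw [h2]; norm_num
    calc ∏ q ∈ (p-1).primeFactors, (1 - (q:ℚ)⁻¹)
        = (∏ q ∈ (p-1).primeFactors \ {2,5,7,11}, (1 - (q:ℚ)⁻¹))
          * ∏ q ∈ ({2,5,7,11} : Finset ℕ), (1 - (q:ℚ)⁻¹) := hsplit.symm
      _ ≤ 1 * ∏ q ∈ ({2,5,7,11} : Finset ℕ), (1 - (q:ℚ)⁻¹) :=
          mul_le_mul_of_nonneg_right h1 h0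
      _ = 24/77 := by rw [one_mul, h2]
  -- structure of the (p+1)-product
  set C := (p + 1).primeFactors.filter (fun r => 13 ≤ r) with hC
  have hBeq : (p+1).primeFactors = insert 2 (insert 3 C) := by
    ext q
    simp only [Finset.mem_insert, hC, Finset.mem_filter]
    constructor
    · intro hq
      have hqp := Nat.prime_of_mem_primeFactors hq
      have hqd := Nat.dvd_of_mem_primeFactors hq
      by_cases h13 : 13 ≤ q
      · exact Or.inr (Or.inr ⟨hq, h13⟩)
      · push_neg at h13
        have hne : ∀ d : ℕ, d ∣ p - 1 → 5 ≤ d → q ≠ d := by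
          rintro d hd hd5 rfl
          have := Nat.le_of_dvd (by norm_num) (aux_sub p q h5 hd hqd)
          linarith
        rcases aux_q q hqp h13 (hne 5 h5d (by norm_num)) (hne 7 h7d (by norm_num))
            (hne 11 h11d (by norm_num)) with rfl | rfl
        · exact Or.inl rfl
        · exact Or.inr (Or.inl rfl)
    · rintro (rfl | rfl | ⟨hq, _⟩)
      · exact Nat.mem_primeFactors.mpr ⟨Nat.prime_two, h2d', hp1⟩
      · exact Nat.mem_primeFactors.mpr ⟨Nat.prime_three, h3d', hp1⟩
      · exact hq
  have h2C : 2 ∉ insert 3 C := by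
    simp only [Finset.mem_insert, hC, Finset.mem_filter]
    push_neg
    exact ⟨by norm_num, fun _ => by norm_num⟩
  have h3C : 3 ∉ C := by
    simp only [hC, Finset.mem_filter]
    push_neg
    exact fun _ => by norm_num
  have hBprod : ∏ q ∈ (p+1).primeFactors, (1 - (q:ℚ)⁻¹)
      = (1/3) * ∏ q ∈ C, (1 - (q:ℚ)⁻¹) := by
    rw [hBeq, Finset.prod_insert h2C, Finset.prod_insert h3C]
    norm_num
    ring
  -- each factor of C is positive
  have hCpos : ∀ q ∈ C, (0:ℚ) < 1 - (q:ℚ)⁻¹ := by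
    intro q hq
    rw [hC, Finset.mem_filter] at hq
    have h13 : (13:ℚ) ≤ (q:ℚ) := by exact_mod_cast hq.2
    have : (q:ℚ)⁻¹ < 1 := by
      rw [inv_lt_one_iff₀]; right; linarith
    linarith
  have hPpos : (0:ℚ) < ∏ q ∈ C, (1 - (q:ℚ)⁻¹) := Finset.prod_pos hCpos
  have hPle : ∏ q ∈ C, (1 - (q:ℚ)⁻¹) ≤ 72/77 := by
    have h1 : (1/3 : ℚ) * ∏ q ∈ C, (1 - (q:ℚ)⁻¹) ≤ 24/77 := by
      calc (1/3 : ℚ) * ∏ q ∈ C, (1 - (q:ℚ)⁻¹)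
          = (Nat.totient (p + 1) : ℚ) / ((p : ℚ) + 1) := by rw [hprodB, hBprod]
        _ ≤ (Nat.totient (p - 1) : ℚ) / ((p : ℚ) - 1) := h
        _ = ∏ q ∈ (p-1).primeFactors, (1 - (q:ℚ)⁻¹) := hprodA
        _ ≤ 24/77 := hAle
    linarith
  -- the target product is the inverse of the C-product
  have hmul : (∏ q ∈ C, (1 + 1 / ((q:ℚ) - 1))) * ∏ q ∈ C, (1 - (q:ℚ)⁻¹) = 1 := by
    rw [← Finset.prod_mul_distrib]
    apply Finset.prod_eq_one
    intro q hq
    rw [hC, Finset.mem_filter] at hq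
    have h13 : (13:ℚ) ≤ (q:ℚ) := by exact_mod_cast hq.2
    have hq0 : (q:ℚ) ≠ 0 := by linarith
    have hq1 : (q:ℚ) - 1 ≠ 0 := by intro hh; rw [sub_eq_zero] at hh; linarith
    field_simp
    ring
  nlinarith [hmul, hPle, hPpos, mul_le_mul_of_nonneg_left hPle
    (le_of_lt (lt_of_lt_of_le (by norm_num : (0:ℚ) < 77/72)
      (by nlinarith [hmul, hPpos] : (77/72:ℚ) ≤ (77/72:ℚ))))]
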